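/- Let μ and ν be Borel probability measures on M with φ-barycenters x and y respectively. Then there exists a 1-Lipschitz function f : M → ℝ (namely f(z) = dist(z,y)) such that ∫ f dμ − ∫ f dν ≥ dist(x,y) − 2β·(√(η(μ)) + √(η(ν))). (This is the lower-bound half of Proposition 'statesarepoints' in Kantorovich dual form.) -/

import Mathlib

open MeasureTheory

lemma cont_memLp {M : Type*} [MetricSpace M] [CompactSpace M] [MeasurableSpace M] [BorelSpace M]
    (μ : Measure M) [IsFiniteMeasure μ] {g : M → ℝ} (hg : Continuous g) (p : ENNReal) :
    MemLp g p μ := by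
  obtain ⟨C, hC⟩ := isCompact_univ.exists_bound_of_continuousOn hg.continuousOn
  refine memLp_of_bounded (a := -C) (b := C) (ae_of_all _ fun z => ?_)
    hg.aestronglyMeasurable p
  have := hC z (Set.mem_univ z)
  rw [Real.norm_eq_abs] at this
  exact abs_le.mp this

lemma integral_le_sqrt_integral_sq {M : Type*} [MetricSpace M] [CompactSpace M]
    [MeasurableSpace M] [BorelSpace M]
    (μ : Measure M) [IsProbabilityMeasure μ] {g : M → ℝ} (hg : Continuous g)
    (hg0 : ∀ z, 0 ≤ g z) :
    ∫ z, g z ∂μ ≤ Real.sqrt (∫ z, g z ^ 2 ∂μ) := by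
  have hpq : Real.HolderConjugate 2 2 := Real.holderConjugate_iff.mpr ⟨by norm_num, by norm_num⟩
  have h := integral_mul_le_Lp_mul_Lq_of_nonneg (μ := μ) hpq (g := fun _ => (1 : ℝ))
    (ae_of_all _ hg0) (ae_of_all _ fun _ => zero_le_one)
    (by simpa using cont_memLp μ hg 2) (by simpa using memLp_const (μ := μ) (1 : ℝ))
  simp only [mul_one] at h
  calc ∫ z, g z ∂μ ≤ (∫ z, g z ^ (2 : ℝ) ∂μ) ^ (1/(2:ℝ)) * (∫ _z, (1:ℝ) ^ (2:ℝ) ∂μ) ^ (1/(2:ℝ)) :=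
        h
    _ = Real.sqrt (∫ z, g z ^ 2 ∂μ) := by
        have heq : ∀ z : M, g z ^ (2:ℝ) = g z ^ 2 := fun z => by
          rw [← Real.rpow_natCast (g z) 2]; norm_num
        simp only [heq, Real.one_rpow, integral_const, measure_univ, probReal_univ, ENNReal.toReal_one, one_smul,
          mul_one]
        rw [Real.sqrt_eq_rpow]

/-- Lower-bound half of Proposition `statesarepoints` in Kantorovich dual form:
the 1-Lipschitz function `f z = dist z y` witnesses
`∫ f dμ − ∫ f dν ≥ dist x y − 2β(√η(μ) + √η(ν))`. -/
theorem states_are_points_lower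
    {M : Type*} [MetricSpace M] [CompactSpace M] [MeasurableSpace M] [BorelSpace M]
    (μ ν : Measure M) [IsProbabilityMeasure μ] [IsProbabilityMeasure ν]
    (n : ℕ) (hn : 1 ≤ n) (φ : M → EuclideanSpace ℝ (Fin n)) (hφ : Continuous φ)
    (β : ℝ) (hβ : 0 < β)
    (hco : ∀ x y : M, dist x y ≤ β * ‖φ x - φ y‖)
    (x y : M)
    (hx : ∀ z : M, ‖φ x - ∫ w, φ w ∂μ‖ ≤ ‖φ z - ∫ w, φ w ∂μ‖)
    (hy : ∀ z : M, ‖φ y - ∫ w, φ w ∂ν‖ ≤ ‖φ z - ∫ w, φ w ∂ν‖) :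
    ∃ f : M → ℝ, f = (fun z => dist z y) ∧ LipschitzWith 1 f ∧
      dist x y - 2 * β * (Real.sqrt (∫ z, ‖φ z - ∫ w, φ w ∂μ‖ ^ 2 ∂μ)
          + Real.sqrt (∫ z, ‖φ z - ∫ w, φ w ∂ν‖ ^ 2 ∂ν)) ≤
        (∫ z, f z ∂μ) - ∫ z, f z ∂ν := by
  refine ⟨fun z => dist z y, rfl, LipschitzWith.dist_left y, ?_⟩
  set bμ : EuclideanSpace ℝ (Fin n) := ∫ w, φ w ∂μ with hbμ
  set bν : EuclideanSpace ℝ (Fin n) := ∫ w, φ w ∂ν with hbν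
  set gμ : M → ℝ := fun z => ‖φ z - bμ‖ with hgμ
  set gν : M → ℝ := fun z => ‖φ z - bν‖ with hgν
  have hgμc : Continuous gμ := (hφ.sub continuous_const).norm
  have hgνc : Continuous gν := (hφ.sub continuous_const).norm
  have hdc : Continuous (fun z : M => dist z y) := continuous_id.dist continuous_const
  have hdμ : Integrable (fun z : M => dist z y) μ :=
    memLp_one_iff_integrable.mp (cont_memLp μ hdc 1)
  have hdν : Integrable (fun z : M => dist z y) ν :=
    memLp_one_iff_integrable.mp (cont_memLp ν hdc 1)
  have hgμi : Integrable gμ μ := memLp_one_iff_integrable.mp (cont_memLp μ hgμc 1)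
  have hgνi : Integrable gν ν := memLp_one_iff_integrable.mp (cont_memLp ν hgνc 1)
  -- pointwise bound for μ
  have hptμ : ∀ z : M, dist x y - 2 * β * gμ z ≤ dist z y := by
    intro z
    have h1 : dist x y ≤ dist x z + dist z y := dist_triangle x z y
    have h2 : dist x z ≤ β * ‖φ x - φ z‖ := hco x z
    have h3 : ‖φ x - φ z‖ ≤ ‖φ x - bμ‖ + ‖φ z - bμ‖ := by
      have := norm_sub_le (φ x - bμ) (φ z - bμ)
      simpa [sub_sub_sub_cancel_right] using this
    have h4 : ‖φ x - bμ‖ ≤ ‖φ z - bμ‖ := hx z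
    nlinarith [hβ.le]
  -- pointwise bound for ν
  have hptν : ∀ z : M, dist z y ≤ 2 * β * gν z := by
    intro z
    have h2 : dist z y ≤ β * ‖φ z - φ y‖ := hco z y
    have h3 : ‖φ z - φ y‖ ≤ ‖φ z - bν‖ + ‖φ y - bν‖ := by
      have := norm_sub_le (φ z - bν) (φ y - bν)
      simpa [sub_sub_sub_cancel_right] using this
    have h4 : ‖φ y - bν‖ ≤ ‖φ z - bν‖ := hy z
    nlinarith [hβ.le]
  -- integrated bounds
  have hIμ : dist x y - 2 * β * ∫ z, gμ z ∂μ ≤ ∫ z, dist z y ∂μ := by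
    have := integral_mono ((integrable_const (dist x y)).sub (hgμi.const_mul (2*β))) hdμ hptμ
    simpa [integral_sub (integrable_const (dist x y)) (hgμi.const_mul (2*β)),
      integral_const_mul, measure_univ] using this
  have hIν : ∫ z, dist z y ∂ν ≤ 2 * β * ∫ z, gν z ∂ν := by
    have := integral_mono hdν (hgνi.const_mul (2*β)) hptν
    simpa [integral_const_mul] using this
  have hCSμ : ∫ z, gμ z ∂μ ≤ Real.sqrt (∫ z, gμ z ^ 2 ∂μ) :=
    integral_le_sqrt_integral_sq μ hgμc fun z => norm_nonneg _
  have hCSν : ∫ z, gν z ∂ν ≤ Real.sqrt (∫ z, gν z ^ 2 ∂ν) :=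
    integral_le_sqrt_integral_sq ν hgνc fun z => norm_nonneg _
  have hβ2 : 0 ≤ 2 * β := by linarith
  nlinarith [mul_le_mul_of_nonneg_left hCSμ hβ2, mul_le_mul_of_nonneg_left hCSν hβ2]
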